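/- arXiv:1103.0131 — 2 statements merged into one kernel-verified Lean document; each statement's English description precedes it below -/
import Mathlib

section
/- Let d ≥ 1. There exists a constant C_d > 0, depending only on d, such that for every continuously differentiable function f : ℝ^d → ℝ and all x, y ∈ ℝ^d, |f(x) − f(y)| ≤ C_d (ℳ|∇f|(x) + ℳ|∇f|(y)) |x − y|, where the inequality is understood in [0,∞] (the right-hand side may be infinite). -/
open MeasureTheory Metric Set
open scoped ENNReal

/-- The Hardy–Littlewood maximal function of an `ℝ≥0∞`-valued function `g` on `ℝ^d`:
`ℳ g (x) = ⨆_{r > 0} (1/|B_r|) ∫_{B_r} g(x+y) dy`, with values in `[0,∞]`. -/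
noncomputable def maximalFn {d : ℕ} (g : EuclideanSpace ℝ (Fin d) → ℝ≥0∞)
    (x : EuclideanSpace ℝ (Fin d)) : ℝ≥0∞ :=
  ⨆ (r : ℝ) (_ : 0 < r),
    (∫⁻ y in ball (0 : EuclideanSpace ℝ (Fin d)) r, g (x + y)) /
      volume (ball (0 : EuclideanSpace ℝ (Fin d)) r)

lemma seg_bound {d : ℕ} {f : EuclideanSpace ℝ (Fin d) → ℝ} (hf : ContDiff ℝ 1 f)
    (p z : EuclideanSpace ℝ (Fin d)) :
    ENNReal.ofReal |f z - f p| ≤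
      (∫⁻ t in Set.Ioc (0:ℝ) 1, (‖fderiv ℝ f (p + t • (z - p))‖₊ : ℝ≥0∞)) * ‖z - p‖₊ := by
  set v := z - p with hv
  have hγc : Continuous fun t : ℝ => p + t • v := by continuity
  have hφ : ∀ t : ℝ, HasDerivAt (fun t : ℝ => f (p + t • v))
      (fderiv ℝ f (p + t • v) v) t := by
    intro t
    have hγ : HasDerivAt (fun t : ℝ => p + t • v) v t := by
      simpa using ((hasDerivAt_id t).smul_const v).const_add p
    exact ((hf.differentiable one_ne_zero (p + t • v)).hasFDerivAt).comp_hasDerivAt t hγ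
  have hcont : Continuous fun t : ℝ => fderiv ℝ f (p + t • v) v :=
    ((hf.continuous_fderiv one_ne_zero).comp hγc).clm_apply continuous_const
  have key : f z - f p = ∫ t in (0:ℝ)..1, fderiv ℝ f (p + t • v) v := by
    have h := intervalIntegral.integral_eq_sub_of_hasDerivAt (fun t _ => hφ t)
      (hcont.intervalIntegrable 0 1)
    have h1 : p + (1:ℝ) • v = z := by simp [hv]
    have h0 : p + (0:ℝ) • v = p := by simp
    rw [h, h1, h0]
  have hint : IntegrableOn (fun t : ℝ => fderiv ℝ f (p + t • v) v) (Set.Ioc (0:ℝ) 1) :=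
    hcont.integrableOn_Ioc
  have h1 : |f z - f p| ≤ ∫ t in Set.Ioc (0:ℝ) 1, ‖fderiv ℝ f (p + t • v) v‖ := by
    rw [key, intervalIntegral.integral_of_le (by norm_num : (0:ℝ) ≤ 1)]
    rw [← Real.norm_eq_abs]
    exact MeasureTheory.norm_integral_le_integral_norm (fun t => fderiv ℝ f (p + t • v) v)
  calc ENNReal.ofReal |f z - f p|
      ≤ ENNReal.ofReal (∫ t in Set.Ioc (0:ℝ) 1, ‖fderiv ℝ f (p + t • v) v‖) :=
        ENNReal.ofReal_le_ofReal h1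
    _ = ∫⁻ t in Set.Ioc (0:ℝ) 1, (‖fderiv ℝ f (p + t • v) v‖₊ : ℝ≥0∞) :=
        ofReal_integral_norm_eq_lintegral_enorm hint
    _ ≤ ∫⁻ t in Set.Ioc (0:ℝ) 1, (‖fderiv ℝ f (p + t • v)‖₊ : ℝ≥0∞) * ‖v‖₊ := by
        refine lintegral_mono fun t => ?_
        exact (ENNReal.coe_le_coe.2 ((fderiv ℝ f (p + t • v)).le_opNNNorm v)).trans_eq
          (ENNReal.coe_mul _ _)
    _ = (∫⁻ t in Set.Ioc (0:ℝ) 1, (‖fderiv ℝ f (p + t • v)‖₊ : ℝ≥0∞)) * ‖v‖₊ := by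
        refine lintegral_mul_const _ ?_
        exact (continuous_nnnorm.comp ((hf.continuous_fderiv one_ne_zero).comp
          hγc)).measurable.coe_nnreal_ennreal

lemma maximal_ge {d : ℕ} (hd : 1 ≤ d) (g : EuclideanSpace ℝ (Fin d) → ℝ≥0∞)
    (x : EuclideanSpace ℝ (Fin d)) {ρ : ℝ} (hρ : 0 < ρ) :
    ∫⁻ u in ball (0 : EuclideanSpace ℝ (Fin d)) ρ, g (x + u) ≤
      maximalFn g x * volume (ball (0 : EuclideanSpace ℝ (Fin d)) ρ) := by
  haveI : Nonempty (Fin d) := ⟨⟨0, hd⟩⟩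
  have h0 : volume (ball (0 : EuclideanSpace ℝ (Fin d)) ρ) ≠ 0 :=
    (measure_ball_pos _ _ hρ).ne'
  have htop : volume (ball (0 : EuclideanSpace ℝ (Fin d)) ρ) ≠ ⊤ :=
    measure_ball_lt_top.ne
  have hle : (∫⁻ u in ball (0 : EuclideanSpace ℝ (Fin d)) ρ, g (x + u)) /
      volume (ball (0 : EuclideanSpace ℝ (Fin d)) ρ) ≤ maximalFn g x := by
    rw [maximalFn]
    exact le_iSup_of_le ρ (le_iSup_of_le hρ le_rfl)
  calc (∫⁻ u in ball (0 : EuclideanSpace ℝ (Fin d)) ρ, g (x + u))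
      = (∫⁻ u in ball (0 : EuclideanSpace ℝ (Fin d)) ρ, g (x + u)) /
          volume (ball (0 : EuclideanSpace ℝ (Fin d)) ρ) *
          volume (ball (0 : EuclideanSpace ℝ (Fin d)) ρ) :=
        (ENNReal.div_mul_cancel h0 htop).symm
    _ ≤ _ := mul_le_mul_left hle _

lemma smul_ball_bound {d : ℕ} (hd : 1 ≤ d) {g : EuclideanSpace ℝ (Fin d) → ℝ≥0∞}
    (hg : Measurable g) (p x : EuclideanSpace ℝ (Fin d)) {r t s : ℝ} (hr : 0 < r)
    (ht : t ∈ Set.Ioc (0:ℝ) 1) (hrs : r ≤ s)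
    (hzs : ∀ z ∈ ball x r, ‖z - p‖ < s) :
    ∫⁻ z in ball x r, g (p + t • (z - p)) ≤
      ENNReal.ofReal ((s / r) ^ d) * (maximalFn g p * volume (ball x r)) := by
  haveI : Nonempty (Fin d) := ⟨⟨0, hd⟩⟩
  obtain ⟨ht0, ht1⟩ := ht
  have hs : 0 < s := hr.trans_le hrs
  set F : EuclideanSpace ℝ (Fin d) → ℝ≥0∞ :=
    (ball (0 : EuclideanSpace ℝ (Fin d)) (t * s)).indicator (fun u => g (p + u)) with hF
  have hFmeas : Measurable F :=
    (hg.comp (measurable_const_add p)).indicator measurableSet_ball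
  have step1 : ∫⁻ z in ball x r, g (p + t • (z - p)) =
      ∫⁻ z in ball x r, F (t • (z - p)) := by
    refine setLIntegral_congr_fun measurableSet_ball (fun z hz => ?_)
    have hmem : t • (z - p) ∈ ball (0 : EuclideanSpace ℝ (Fin d)) (t * s) := by
      rw [mem_ball_zero_iff, norm_smul, Real.norm_eq_abs, abs_of_pos ht0]
      exact mul_lt_mul_of_pos_left (hzs z hz) ht0
    rw [hF, Set.indicator_of_mem hmem]
  have step2 : ∫⁻ z, F (t • (z - p)) ∂volume = ∫⁻ w, F (t • w) ∂volume := by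
    simp_rw [sub_eq_add_neg]
    exact lintegral_add_right_eq_self (fun w => F (t • w)) (-p)
  have step3 : ∫⁻ w, F (t • w) ∂volume =
      ENNReal.ofReal ((t ^ d)⁻¹) * ∫⁻ u, F u ∂volume := by
    have hmap := Measure.map_addHaar_smul (volume : Measure (EuclideanSpace ℝ (Fin d))) ht0.ne'
    rw [← lintegral_map hFmeas (measurable_const_smul t), hmap, lintegral_smul_measure,
      finrank_euclideanSpace_fin, abs_of_pos (by positivity : (0:ℝ) < (t ^ d)⁻¹), smul_eq_mul]
  have step4 : ∫⁻ u, F u ∂volume =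
      ∫⁻ u in ball (0 : EuclideanSpace ℝ (Fin d)) (t * s), g (p + u) :=
    lintegral_indicator measurableSet_ball _
  have step5 : ∫⁻ u in ball (0 : EuclideanSpace ℝ (Fin d)) (t * s), g (p + u) ≤
      maximalFn g p * volume (ball (0 : EuclideanSpace ℝ (Fin d)) (t * s)) :=
    maximal_ge hd g p (by positivity)
  have hvol1 : volume (ball (0 : EuclideanSpace ℝ (Fin d)) (t * s)) =
      ENNReal.ofReal ((t * s) ^ d) * volume (ball (0 : EuclideanSpace ℝ (Fin d)) 1) := by
    rw [Measure.addHaar_ball _ _ (by positivity : (0:ℝ) ≤ t * s), finrank_euclideanSpace_fin]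
  have hvol2 : volume (ball x r) =
      ENNReal.ofReal (r ^ d) * volume (ball (0 : EuclideanSpace ℝ (Fin d)) 1) := by
    rw [Measure.addHaar_ball_center, Measure.addHaar_ball _ _ hr.le, finrank_euclideanSpace_fin]
  calc ∫⁻ z in ball x r, g (p + t • (z - p))
      = ∫⁻ z in ball x r, F (t • (z - p)) := step1
    _ ≤ ∫⁻ z, F (t • (z - p)) ∂volume := setLIntegral_le_lintegral _ _
    _ = ENNReal.ofReal ((t ^ d)⁻¹) * ∫⁻ u, F u ∂volume := by rw [step2, step3]
    _ ≤ ENNReal.ofReal ((t ^ d)⁻¹) *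
        (maximalFn g p * volume (ball (0 : EuclideanSpace ℝ (Fin d)) (t * s))) := by
        rw [step4]; exact mul_le_mul_right step5 _
    _ = ENNReal.ofReal ((s / r) ^ d) * (maximalFn g p * volume (ball x r)) := by
        rw [hvol1, hvol2]
        have hts : ((t * s) ^ d : ℝ) = t ^ d * ((s / r) ^ d * r ^ d) := by
          rw [mul_pow, div_pow, div_mul_cancel₀ _ (by positivity : (r:ℝ) ^ d ≠ 0)]
        rw [hts, ENNReal.ofReal_mul (by positivity), ENNReal.ofReal_mul (by positivity)]
        have hinv : ENNReal.ofReal ((t ^ d)⁻¹) * ENNReal.ofReal (t ^ d) = 1 := by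
          rw [← ENNReal.ofReal_mul (by positivity), inv_mul_cancel₀ (by positivity)]
          simp
        calc ENNReal.ofReal ((t ^ d)⁻¹) * (maximalFn g p *
              (ENNReal.ofReal (t ^ d) * (ENNReal.ofReal ((s / r) ^ d) * ENNReal.ofReal (r ^ d)) *
                volume (ball (0 : EuclideanSpace ℝ (Fin d)) 1)))
            = (ENNReal.ofReal ((t ^ d)⁻¹) * ENNReal.ofReal (t ^ d)) *
              (ENNReal.ofReal ((s / r) ^ d) * (maximalFn g p *
                (ENNReal.ofReal (r ^ d) * volume (ball (0 : EuclideanSpace ℝ (Fin d)) 1)))) := by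
              ring
          _ = _ := by rw [hinv, one_mul]

lemma ball_avg {d : ℕ} (hd : 1 ≤ d) {f : EuclideanSpace ℝ (Fin d) → ℝ} (hf : ContDiff ℝ 1 f)
    (x p : EuclideanSpace ℝ (Fin d)) {r s : ℝ} (hr : 0 < r) (hrs : r ≤ s)
    (hxp : ‖x - p‖ + r ≤ s) :
    ∫⁻ z in ball x r, ENNReal.ofReal |f z - f p| ≤
      ENNReal.ofReal ((s / r) ^ d * s) *
        (maximalFn (fun z => (‖fderiv ℝ f z‖₊ : ℝ≥0∞)) p * volume (ball x r)) := by
  set G : EuclideanSpace ℝ (Fin d) → ℝ≥0∞ := fun z => (‖fderiv ℝ f z‖₊ : ℝ≥0∞) with hG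
  have hGc : Continuous G :=
    ENNReal.continuous_coe.comp (continuous_nnnorm.comp (hf.continuous_fderiv one_ne_zero))
  have hs : 0 < s := hr.trans_le hrs
  have hzs : ∀ z ∈ ball x r, ‖z - p‖ < s := by
    intro z hz
    have : ‖z - p‖ ≤ ‖z - x‖ + ‖x - p‖ := by
      simpa using norm_add_le (z - x) (x - p)
    calc ‖z - p‖ ≤ ‖z - x‖ + ‖x - p‖ := this
      _ < r + ‖x - p‖ := by
          have := mem_ball_iff_norm.1 hz
          linarith
      _ ≤ s := by linarith
  have hpt : ∀ z ∈ ball x r, ENNReal.ofReal |f z - f p| ≤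
      (∫⁻ t in Set.Ioc (0:ℝ) 1, G (p + t • (z - p))) * ENNReal.ofReal s := by
    intro z hz
    refine (seg_bound hf p z).trans (mul_le_mul_right ?_ _)
    rw [← ENNReal.ofReal_coe_nnreal, coe_nnnorm]
    exact ENNReal.ofReal_le_ofReal (hzs z hz).le
  have hswap : ∫⁻ z in ball x r, ∫⁻ t in Set.Ioc (0:ℝ) 1, G (p + t • (z - p)) =
      ∫⁻ t in Set.Ioc (0:ℝ) 1, ∫⁻ z in ball x r, G (p + t • (z - p)) := by
    refine lintegral_lintegral_swap ?_
    have : Continuous fun q : EuclideanSpace ℝ (Fin d) × ℝ => G (p + q.2 • (q.1 - p)) := by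
      apply hGc.comp
      fun_prop
    exact this.measurable.aemeasurable
  calc ∫⁻ z in ball x r, ENNReal.ofReal |f z - f p|
      ≤ ∫⁻ z in ball x r,
          (∫⁻ t in Set.Ioc (0:ℝ) 1, G (p + t • (z - p))) * ENNReal.ofReal s :=
        setLIntegral_mono' measurableSet_ball hpt
    _ = (∫⁻ z in ball x r, ∫⁻ t in Set.Ioc (0:ℝ) 1, G (p + t • (z - p))) *
          ENNReal.ofReal s := lintegral_mul_const' _ _ ENNReal.ofReal_ne_top
    _ = (∫⁻ t in Set.Ioc (0:ℝ) 1, ∫⁻ z in ball x r, G (p + t • (z - p))) *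
          ENNReal.ofReal s := by rw [hswap]
    _ ≤ (∫⁻ _ in Set.Ioc (0:ℝ) 1,
          ENNReal.ofReal ((s / r) ^ d) * (maximalFn G p * volume (ball x r))) *
          ENNReal.ofReal s := by
        refine mul_le_mul_left (setLIntegral_mono' measurableSet_Ioc fun t ht => ?_) _
        exact smul_ball_bound hd hGc.measurable p x hr ht hrs hzs
    _ = ENNReal.ofReal ((s / r) ^ d) * (maximalFn G p * volume (ball x r)) *
          ENNReal.ofReal s := by
        rw [setLIntegral_const, Real.volume_Ioc]
        norm_num
    _ = ENNReal.ofReal ((s / r) ^ d * s) * (maximalFn G p * volume (ball x r)) := by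
        rw [ENNReal.ofReal_mul (by positivity)]
        ring

/-- There is a constant `C_d > 0` such that for every continuously differentiable
`f : ℝ^d → ℝ` and all `x, y`,
`|f(x) − f(y)| ≤ C_d (ℳ|∇f|(x) + ℳ|∇f|(y)) |x − y|`, the inequality being in `[0,∞]`. -/
theorem stmt4 (d : ℕ) (hd : 1 ≤ d) :
    ∃ C : ℝ, 0 < C ∧ ∀ f : EuclideanSpace ℝ (Fin d) → ℝ, ContDiff ℝ 1 f →
      ∀ x y : EuclideanSpace ℝ (Fin d),
        ENNReal.ofReal |f x - f y| ≤
          ENNReal.ofReal C *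
            (maximalFn (fun z => (‖fderiv ℝ f z‖₊ : ℝ≥0∞)) x +
              maximalFn (fun z => (‖fderiv ℝ f z‖₊ : ℝ≥0∞)) y) * edist x y := by
  haveI : Nonempty (Fin d) := ⟨⟨0, hd⟩⟩
  refine ⟨2 ^ (d + 1), by positivity, fun f hf x y => ?_⟩
  set G : EuclideanSpace ℝ (Fin d) → ℝ≥0∞ := fun z => (‖fderiv ℝ f z‖₊ : ℝ≥0∞) with hG
  rcases eq_or_ne x y with rfl | hxy
  · simp
  set r : ℝ := dist x y with hrdef
  have hr : 0 < r := dist_pos.2 hxy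
  set B : Set (EuclideanSpace ℝ (Fin d)) := ball x r with hB
  have h0 : volume B ≠ 0 := (measure_ball_pos _ _ hr).ne'
  have htop : volume B ≠ ⊤ := measure_ball_lt_top.ne
  -- bound for p = x
  have hx : ∫⁻ z in B, ENNReal.ofReal |f z - f x| ≤
      ENNReal.ofReal ((r / r) ^ d * r) * (maximalFn G x * volume B) :=
    ball_avg hd hf x x hr le_rfl (by simp)
  -- bound for p = y
  have hy : ∫⁻ z in B, ENNReal.ofReal |f z - f y| ≤
      ENNReal.ofReal ((2 * r / r) ^ d * (2 * r)) * (maximalFn G y * volume B) :=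
    ball_avg hd hf x y hr (by linarith)
      (by rw [← dist_eq_norm]; rw [← hrdef]; linarith)
  have hmain : ENNReal.ofReal |f x - f y| * volume B ≤
      ENNReal.ofReal (2 ^ (d + 1) * r) * (maximalFn G x + maximalFn G y) * volume B := by
    have hdiv : (r / r : ℝ) = 1 := div_self hr.ne'
    have hdiv2 : (2 * r / r : ℝ) = 2 := by field_simp
    rw [hdiv] at hx
    rw [hdiv2] at hy
    calc ENNReal.ofReal |f x - f y| * volume B
        = ∫⁻ _ in B, ENNReal.ofReal |f x - f y| := (setLIntegral_const _ _).symm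
      _ ≤ ∫⁻ z in B, (ENNReal.ofReal |f z - f x| + ENNReal.ofReal |f z - f y|) := by
          refine setLIntegral_mono' measurableSet_ball fun z _ => ?_
          refine le_trans (ENNReal.ofReal_le_ofReal ?_) (ENNReal.ofReal_add_le)
          calc |f x - f y| = |(f z - f y) - (f z - f x)| := by ring_nf
            _ ≤ |f z - f x| + |f z - f y| := by
                rw [abs_sub_comm]
                exact (abs_sub _ _)
      _ = (∫⁻ z in B, ENNReal.ofReal |f z - f x|) +
            ∫⁻ z in B, ENNReal.ofReal |f z - f y| := by
          refine lintegral_add_left ?_ _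
          exact (ENNReal.measurable_ofReal.comp
            ((continuous_abs.comp ((hf.continuous).sub continuous_const)).measurable))
      _ ≤ ENNReal.ofReal ((1:ℝ) ^ d * r) * (maximalFn G x * volume B) +
            ENNReal.ofReal ((2:ℝ) ^ d * (2 * r)) * (maximalFn G y * volume B) :=
          add_le_add hx hy
      _ ≤ ENNReal.ofReal (2 ^ (d + 1) * r) * (maximalFn G x * volume B) +
            ENNReal.ofReal (2 ^ (d + 1) * r) * (maximalFn G y * volume B) := by
          refine add_le_add (mul_le_mul_left (ENNReal.ofReal_le_ofReal ?_) _)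
            (mul_le_mul_left (ENNReal.ofReal_le_ofReal ?_) _)
          · have : (1:ℝ) ^ d = 1 := one_pow d
            rw [this, one_mul]
            nlinarith [one_le_pow₀ (by norm_num : (1:ℝ) ≤ 2) (n := d + 1), hr]
          · rw [pow_succ]
            nlinarith
      _ = ENNReal.ofReal (2 ^ (d + 1) * r) * (maximalFn G x + maximalFn G y) * volume B := by
          ring
  have hcancel := (ENNReal.mul_le_mul_iff_left h0 htop).1 hmain
  calc ENNReal.ofReal |f x - f y|
      ≤ ENNReal.ofReal (2 ^ (d + 1) * r) * (maximalFn G x + maximalFn G y) := hcancel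
    _ = ENNReal.ofReal (2 ^ (d + 1)) * (maximalFn G x + maximalFn G y) * edist x y := by
        rw [edist_dist, ← hrdef, ENNReal.ofReal_mul (by positivity)]
        ring
end

section
/- Let d ≥ 1 and let ν be a Lévy measure on ℝ^d. Let f : ℝ^d → ℝ be twice continuously differentiable with f, ∇f, ∇²f bounded, and let g : ℝ^d → ℝ be twice continuously differentiable with compact support. Then the functions x ↦ ℒf(x)·g(x) and x ↦ f(x)·ℒ*g(x) are Lebesgue integrable on ℝ^d and ∫_{ℝ^d} ℒf(x) g(x) dx = ∫_{ℝ^d} f(x) ℒ*g(x) dx. -/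
open MeasureTheory Set
open scoped ENNReal Pointwise

/-- A Lévy measure on `ℝ^d`: a Borel measure with `ν({0}) = 0` and
`∫ min(1,|y|²) ν(dy) < ∞`. -/
def IsLevyMeasure {d : ℕ} (ν : Measure (EuclideanSpace ℝ (Fin d))) : Prop :=
  ν {0} = 0 ∧ ∫⁻ y, ENNReal.ofReal (min 1 (‖y‖ ^ 2)) ∂ν < ⊤

/-- The nonlocal operator associated to a Lévy measure:
`ℒf(x) = ∫ (f(x+y) − f(x) − 1_{|y|≤1}(y)⟨y,∇f(x)⟩) ν(dy)`. -/
noncomputable def levyOp {d : ℕ} (ν : Measure (EuclideanSpace ℝ (Fin d)))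
    (f : EuclideanSpace ℝ (Fin d) → ℝ) (x : EuclideanSpace ℝ (Fin d)) : ℝ :=
  ∫ y, (f (x + y) - f x - if ‖y‖ ≤ 1 then fderiv ℝ f x y else 0) ∂ν

/-- The formal adjoint of the nonlocal operator:
`ℒ*g(x) = ∫ (g(x−y) − g(x) + 1_{|y|≤1}(y)⟨y,∇g(x)⟩) ν(dy)`. -/
noncomputable def levyOpStar {d : ℕ} (ν : Measure (EuclideanSpace ℝ (Fin d)))
    (g : EuclideanSpace ℝ (Fin d) → ℝ) (x : EuclideanSpace ℝ (Fin d)) : ℝ :=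
  ∫ y, (g (x - y) - g x + if ‖y‖ ≤ 1 then fderiv ℝ g x y else 0) ∂ν

section Aux

variable {E : Type*} [NormedAddCommGroup E] [NormedSpace ℝ E]

/-- second-order Taylor bound -/
lemma taylor_bound' {f : E → ℝ} (hf : ContDiff ℝ 2 f) {M2 : ℝ}
    (hM2 : ∀ x, ‖iteratedFDeriv ℝ 2 f x‖ ≤ M2) (x y : E) :
    ‖f (x + y) - f x - fderiv ℝ f x y‖ ≤ M2 * ‖y‖ ^ 2 := by
  have hd1 : Differentiable ℝ f := hf.differentiable two_ne_zero
  have hc1 : ContDiff ℝ 1 (fderiv ℝ f) := hf.fderiv_right (by norm_num)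
  have hd2 : Differentiable ℝ (fderiv ℝ f) := hc1.differentiable one_ne_zero
  have hnorm : ∀ z, ‖fderiv ℝ (fderiv ℝ f) z‖ ≤ M2 := by
    intro z
    have h1 : ‖iteratedFDeriv ℝ 0 (fderiv ℝ (fderiv ℝ f)) z‖
        = ‖iteratedFDeriv ℝ 1 (fderiv ℝ f) z‖ := norm_iteratedFDeriv_fderiv (n := 0)
    have h2 : ‖iteratedFDeriv ℝ 1 (fderiv ℝ f) z‖ = ‖iteratedFDeriv ℝ 2 f z‖ :=
      norm_iteratedFDeriv_fderiv (n := 1)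
    rw [norm_iteratedFDeriv_zero] at h1
    rw [h1, h2]
    exact hM2 z
  have hlip : ∀ a b : E, ‖fderiv ℝ f a - fderiv ℝ f b‖ ≤ M2 * ‖a - b‖ := by
    intro a b
    exact convex_univ.norm_image_sub_le_of_norm_fderiv_le
      (fun z _ => (hd2 z)) (fun z _ => hnorm z) (mem_univ b) (mem_univ a)
  have hmem1 : x ∈ Metric.closedBall x ‖y‖ := Metric.mem_closedBall_self (norm_nonneg y)
  have hmem2 : x + y ∈ Metric.closedBall x ‖y‖ := by
    simp [Metric.mem_closedBall, dist_eq_norm]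
  have := (convex_closedBall x ‖y‖).norm_image_sub_le_of_norm_fderiv_le'
    (fun z _ => (hd1 z)) (φ := fderiv ℝ f x) (C := M2 * ‖y‖)
    (fun z hz => by
      calc ‖fderiv ℝ f z - fderiv ℝ f x‖ ≤ M2 * ‖z - x‖ := hlip z x
        _ ≤ M2 * ‖y‖ := by
            have hM2nn : 0 ≤ M2 := le_trans (norm_nonneg _) (hM2 x)
            have : ‖z - x‖ ≤ ‖y‖ := by
              simpa [dist_eq_norm] using hz
            exact mul_le_mul_of_nonneg_left this hM2nn)
    hmem1 hmem2
  simpa [add_sub_cancel_left, pow_two, mul_assoc] using this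

lemma min_nonneg' (y : E) : 0 ≤ min 1 (‖y‖ ^ 2) :=
  le_min zero_le_one (by positivity)

lemma integrable_min_sq {m0 : MeasurableSpace E} (ν : Measure E)
    (h : ∫⁻ y, ENNReal.ofReal (min 1 (‖y‖ ^ 2)) ∂ν < ⊤) [OpensMeasurableSpace E] :
    Integrable (fun y : E => min 1 (‖y‖ ^ 2)) ν := by
  refine ⟨(continuous_const.min (continuous_norm.pow 2)).aestronglyMeasurable, ?_⟩
  rw [hasFiniteIntegral_iff_ofReal (ae_of_all _ fun y => min_nonneg' y)]
  exact h

lemma levy_sigmaFinite {m0 : MeasurableSpace E} [OpensMeasurableSpace E]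
    (ν : Measure E) (h0 : ν {0} = 0)
    (h : ∫⁻ y, ENNReal.ofReal (min 1 (‖y‖ ^ 2)) ∂ν < ⊤) : SigmaFinite ν := by
  set A : ℕ → Set E := fun n => {0} ∪ {y | 1 / (n + 1 : ℝ) ≤ min 1 (‖y‖ ^ 2)} with hA
  apply MeasureTheory.Measure.sigmaFinite_of_countable (S := Set.range A) (countable_range A)
  · rintro s ⟨n, rfl⟩
    have hB : ν {y : E | 1 / (n + 1 : ℝ) ≤ min 1 (‖y‖ ^ 2)} < ⊤ := by
      have hmeas : AEMeasurable (fun y : E => ENNReal.ofReal (min 1 (‖y‖ ^ 2))) ν :=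
        ((continuous_const.min (continuous_norm.pow 2)).measurable.ennreal_ofReal).aemeasurable
      have hε : (0:ℝ) < 1 / (n + 1 : ℝ) := by positivity
      have hset : {y : E | 1 / (n + 1 : ℝ) ≤ min 1 (‖y‖ ^ 2)}
          = {y : E | ENNReal.ofReal (1 / (n + 1 : ℝ)) ≤ ENNReal.ofReal (min 1 (‖y‖ ^ 2))} := by
        ext y
        simp only [Set.mem_setOf_eq, ENNReal.ofReal_le_ofReal_iff (min_nonneg' y)]
      rw [hset]
      calc ν _ ≤ (∫⁻ y, ENNReal.ofReal (min 1 (‖y‖ ^ 2)) ∂ν) / ENNReal.ofReal (1 / (n + 1 : ℝ)) :=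
            meas_ge_le_lintegral_div hmeas
              (by simp [ENNReal.ofReal_eq_zero, not_le, hε, hε.le]; positivity)
              ENNReal.ofReal_ne_top
        _ < ⊤ := ENNReal.div_lt_top h.ne
              (by simp [ENNReal.ofReal_eq_zero, not_le, hε]; positivity)
    calc ν (A n) ≤ ν {0} + ν {y : E | 1 / (n + 1 : ℝ) ≤ min 1 (‖y‖ ^ 2)} := measure_union_le _ _
      _ < ⊤ := by rw [h0]; simpa using hB
  · apply eq_univ_of_forall
    intro y
    rcases eq_or_ne y 0 with rfl | hy
    · exact mem_sUnion.2 ⟨A 0, ⟨0, rfl⟩, Or.inl rfl⟩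
    · have hpos : 0 < min 1 (‖y‖ ^ 2) :=
        lt_min one_pos (by have := norm_pos_iff.2 hy; positivity)
      obtain ⟨n, hn⟩ := exists_nat_one_div_lt hpos
      exact mem_sUnion.2 ⟨A n, ⟨n, rfl⟩, Or.inr hn.le⟩

end Aux

set_option maxHeartbeats 2000000 in
/-- Integration by parts for the nonlocal operator: for `f ∈ C²_b` and `g ∈ C²` with
compact support, `x ↦ ℒf(x)g(x)` and `x ↦ f(x)ℒ*g(x)` are Lebesgue integrable and
`∫ ℒf · g = ∫ f · ℒ*g`. -/
theorem stmt9 (d : ℕ) (hd : 1 ≤ d) (ν : Measure (EuclideanSpace ℝ (Fin d)))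
    (hν : IsLevyMeasure ν)
    (f : EuclideanSpace ℝ (Fin d) → ℝ) (hf : ContDiff ℝ 2 f)
    (Mf M1 M2 : ℝ)
    (hMf : ∀ x, |f x| ≤ Mf) (hM1 : ∀ x, ‖fderiv ℝ f x‖ ≤ M1)
    (hM2 : ∀ x, ‖iteratedFDeriv ℝ 2 f x‖ ≤ M2)
    (g : EuclideanSpace ℝ (Fin d) → ℝ) (hg : ContDiff ℝ 2 g)
    (hgsupp : HasCompactSupport g) :
    Integrable (fun x => levyOp ν f x * g x) volume ∧
    Integrable (fun x => f x * levyOpStar ν g x) volume ∧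
    ∫ x, levyOp ν f x * g x = ∫ x, f x * levyOpStar ν g x := by
  haveI : SigmaFinite ν := levy_sigmaFinite ν hν.1 hν.2
  -- basic facts
  have hfc : Continuous f := hf.continuous
  have hgc : Continuous g := hg.continuous
  have hfd : Differentiable ℝ f := hf.differentiable two_ne_zero
  have hgd : Differentiable ℝ g := hg.differentiable two_ne_zero
  have hfd' : Continuous fun p : EuclideanSpace ℝ (Fin d) × EuclideanSpace ℝ (Fin d) => fderiv ℝ f p.1 p.2 :=
    hf.continuous_fderiv_apply two_ne_zero
  have hgd' : Continuous fun p : EuclideanSpace ℝ (Fin d) × EuclideanSpace ℝ (Fin d) => fderiv ℝ g p.1 p.2 :=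
    hg.continuous_fderiv_apply two_ne_zero
  have hMf0 : 0 ≤ Mf := (abs_nonneg _).trans (hMf 0)
  have hM20 : 0 ≤ M2 := (norm_nonneg _).trans (hM2 0)
  obtain ⟨Mg2, hMg2⟩ : ∃ C, ∀ x, ‖iteratedFDeriv ℝ 2 g x‖ ≤ C := by
    obtain ⟨C, hC⟩ := (hg.continuous_iteratedFDeriv (le_refl 2)).bounded_above_of_compact_support
      (hgsupp.iteratedFDeriv 2)
    exact ⟨C, hC⟩
  have hMg20 : 0 ≤ Mg2 := (norm_nonneg _).trans (hMg2 0)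
  -- kernel bound for f
  have hKf : ∀ x y : EuclideanSpace ℝ (Fin d), |f (x + y) - f x - (if ‖y‖ ≤ 1 then fderiv ℝ f x y else 0)|
      ≤ (2 * Mf + M2) * min 1 (‖y‖ ^ 2) := by
    intro x y
    by_cases hy : ‖y‖ ≤ 1
    · rw [if_pos hy]
      have h1 : min 1 (‖y‖ ^ 2) = ‖y‖ ^ 2 :=
        min_eq_right (by nlinarith [norm_nonneg y])
      rw [h1]
      have := taylor_bound' hf hM2 x y
      have h2 : M2 * ‖y‖ ^ 2 ≤ (2 * Mf + M2) * ‖y‖ ^ 2 := by nlinarith [sq_nonneg ‖y‖]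
      calc |f (x + y) - f x - fderiv ℝ f x y| ≤ M2 * ‖y‖ ^ 2 := this
        _ ≤ _ := h2
    · rw [if_neg hy]
      have h1 : min 1 (‖y‖ ^ 2) = 1 := min_eq_left (by nlinarith [norm_nonneg y, not_le.1 hy])
      rw [h1, mul_one, sub_zero]
      calc |f (x + y) - f x| ≤ |f (x + y)| + |f x| := abs_sub _ _
        _ ≤ Mf + Mf := add_le_add (hMf _) (hMf _)
        _ ≤ 2 * Mf + M2 := by linarith
  -- Taylor bound for g
  have hTg : ∀ x y : EuclideanSpace ℝ (Fin d), |g (x - y) - g x + fderiv ℝ g x y| ≤ Mg2 * ‖y‖ ^ 2 := by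
    intro x y
    have h := taylor_bound' hg hMg2 x (-y)
    have e : g (x - y) - g x + fderiv ℝ g x y
        = g (x + -y) - g x - fderiv ℝ g x (-y) := by
      rw [map_neg, sub_eq_add_neg x y]
      ring
    rw [e]
    simpa [norm_neg] using h
  -- integrability of min 1 ‖y‖²
  have hminI : Integrable (fun y : EuclideanSpace ℝ (Fin d) => min 1 (‖y‖ ^ 2)) ν := integrable_min_sq ν hν.2
  set Iν : ℝ := ∫ y, min 1 (‖y‖ ^ 2) ∂ν with hIνdef
  have hIν0 : 0 ≤ Iν := integral_nonneg fun y => min_nonneg' y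
  -- integrability of compactly supported pieces, for each y
  have hgint : Integrable g volume := hgc.integrable_of_hasCompactSupport hgsupp
  have hi1 : ∀ y : EuclideanSpace ℝ (Fin d), Integrable (fun x => f (x + y) * g x) volume := fun y =>
    ((hfc.comp (continuous_id.add continuous_const)).mul hgc).integrable_of_hasCompactSupport
      hgsupp.mul_left
  have hi2 : Integrable (fun x => f x * g x) volume :=
    (hfc.mul hgc).integrable_of_hasCompactSupport hgsupp.mul_left
  have hi3 : ∀ y : EuclideanSpace ℝ (Fin d), Integrable (fun x => fderiv ℝ f x y * g x) volume := fun y =>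
    ((hfd'.comp (continuous_id.prodMk continuous_const)).mul hgc).integrable_of_hasCompactSupport
      hgsupp.mul_left
  have hgsub : ∀ y : EuclideanSpace ℝ (Fin d), HasCompactSupport fun x => g (x - y) := fun y =>
    hgsupp.comp_homeomorph (Homeomorph.subRight y)
  have hi4 : ∀ y : EuclideanSpace ℝ (Fin d), Integrable (fun x => f x * g (x - y)) volume := fun y =>
    (hfc.mul (hgc.comp (continuous_id.sub continuous_const))).integrable_of_hasCompactSupport
      (hgsub y).mul_left
  have hfderivg_supp : ∀ y : EuclideanSpace ℝ (Fin d), HasCompactSupport fun x => fderiv ℝ g x y := fun y =>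
    (hgsupp.fderiv ℝ).comp_left
      (g := fun L : EuclideanSpace ℝ (Fin d) →L[ℝ] ℝ => L y) (by simp)
  have hi5 : ∀ y : EuclideanSpace ℝ (Fin d), Integrable (fun x => f x * fderiv ℝ g x y) volume := fun y =>
    (hfc.mul (hgd'.comp (continuous_id.prodMk continuous_const))).integrable_of_hasCompactSupport
      (hfderivg_supp y).mul_left
  -- per-y integration by parts identity
  have hswap : ∀ y : EuclideanSpace ℝ (Fin d),
      (∫ x, (f (x + y) - f x - if ‖y‖ ≤ 1 then fderiv ℝ f x y else 0) * g x)
      = ∫ x, f x * (g (x - y) - g x + if ‖y‖ ≤ 1 then fderiv ℝ g x y else 0) := by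
    intro y
    have htrans : (∫ x, f (x + y) * g x) = ∫ x, f x * g (x - y) := by
      have h := integral_sub_right_eq_self (μ := volume) (fun x => f (x + y) * g x) y
      simp only [sub_add_cancel] at h
      exact h.symm
    by_cases hy : ‖y‖ ≤ 1
    · simp only [if_pos hy]
      have hibp : (∫ x, f x * fderiv ℝ g x y) = - ∫ x, fderiv ℝ f x y * g x :=
        integral_mul_fderiv_eq_neg_fderiv_mul_of_integrable (hi3 y) (hi5 y) hi2 (fun x _ => hfd x) (fun x _ => hgd x)
      have e1 : ∀ x : EuclideanSpace ℝ (Fin d), (f (x + y) - f x - fderiv ℝ f x y) * g x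
          = f (x + y) * g x - f x * g x - fderiv ℝ f x y * g x := fun x => by ring
      have e2 : ∀ x : EuclideanSpace ℝ (Fin d), f x * (g (x - y) - g x + fderiv ℝ g x y)
          = f x * g (x - y) - f x * g x + f x * fderiv ℝ g x y := fun x => by ring
      simp_rw [e1, e2]
      have ha : Integrable (fun x => f (x + y) * g x - f x * g x) volume := (hi1 y).sub hi2
      have hb : Integrable (fun x => f x * g (x - y) - f x * g x) volume := (hi4 y).sub hi2
      have A1 : (∫ x, (f (x + y) * g x - f x * g x) - fderiv ℝ f x y * g x)
          = (∫ x, f (x + y) * g x - f x * g x) - ∫ x, fderiv ℝ f x y * g x :=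
        integral_sub ha (hi3 y)
      have A2 : (∫ x, f (x + y) * g x - f x * g x)
          = (∫ x, f (x + y) * g x) - ∫ x, f x * g x := integral_sub (hi1 y) hi2
      have A3 : (∫ x, (f x * g (x - y) - f x * g x) + f x * fderiv ℝ g x y)
          = (∫ x, f x * g (x - y) - f x * g x) + ∫ x, f x * fderiv ℝ g x y :=
        integral_add hb (hi5 y)
      have A4 : (∫ x, f x * g (x - y) - f x * g x)
          = (∫ x, f x * g (x - y)) - ∫ x, f x * g x := integral_sub (hi4 y) hi2
      rw [show (∫ x, f (x + y) * g x - f x * g x - fderiv ℝ f x y * g x)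
          = (∫ x, (f (x + y) * g x - f x * g x) - fderiv ℝ f x y * g x) by
            apply integral_congr_ae (ae_of_all _ fun x => by ring),
        A1, A2,
        show (∫ x, f x * g (x - y) - f x * g x + f x * fderiv ℝ g x y)
          = (∫ x, (f x * g (x - y) - f x * g x) + f x * fderiv ℝ g x y) by
            apply integral_congr_ae (ae_of_all _ fun x => by ring),
        A3, A4, htrans, hibp]
      ring
    · simp only [if_neg hy, sub_zero, add_zero]
      have e1 : ∀ x : EuclideanSpace ℝ (Fin d), (f (x + y) - f x) * g x = f (x + y) * g x - f x * g x :=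
        fun x => by ring
      have e2 : ∀ x : EuclideanSpace ℝ (Fin d), f x * (g (x - y) - g x) = f x * g (x - y) - f x * g x :=
        fun x => by ring
      simp_rw [e1, e2]
      rw [integral_sub (hi1 y) hi2, integral_sub (hi4 y) hi2, htrans]
  -- strong measurability of both product kernels
  have hsetm : MeasurableSet {p : EuclideanSpace ℝ (Fin d) × EuclideanSpace ℝ (Fin d) | ‖p.2‖ ≤ 1} :=
    (isClosed_le continuous_snd.norm continuous_const).measurableSet
  have hFsm : StronglyMeasurable
      (Function.uncurry fun x y : EuclideanSpace ℝ (Fin d) =>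
        (f (x + y) - f x - if ‖y‖ ≤ 1 then fderiv ℝ f x y else 0) * g x) := by
    apply Measurable.stronglyMeasurable
    exact ((((hfc.comp (continuous_fst.add continuous_snd)).sub
        (hfc.comp continuous_fst)).measurable.sub
      (Measurable.ite hsetm hfd'.measurable measurable_const)).mul
      (hgc.comp continuous_fst).measurable)
  have hGsm : StronglyMeasurable
      (Function.uncurry fun x y : EuclideanSpace ℝ (Fin d) =>
        f x * (g (x - y) - g x + if ‖y‖ ≤ 1 then fderiv ℝ g x y else 0)) := by
    apply Measurable.stronglyMeasurable
    exact ((hfc.comp continuous_fst).measurable.mul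
      ((((hgc.comp (continuous_fst.sub continuous_snd)).sub
        (hgc.comp continuous_fst)).measurable.add
      (Measurable.ite hsetm hgd'.measurable measurable_const))))
  -- integrability of F on the product
  have hFint : Integrable
      (Function.uncurry fun x y : EuclideanSpace ℝ (Fin d) =>
        (f (x + y) - f x - if ‖y‖ ≤ 1 then fderiv ℝ f x y else 0) * g x)
      (volume.prod ν) := by
    rw [integrable_prod_iff hFsm.aestronglyMeasurable]
    constructor
    · refine ae_of_all _ fun x => ?_
      refine Integrable.mono' (hminI.const_mul ((2 * Mf + M2) * |g x|))
        ((hFsm.comp_measurable measurable_prodMk_left).aestronglyMeasurable)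
        (ae_of_all _ fun y => ?_)
      simp only [Function.uncurry_apply_pair]
      rw [Real.norm_eq_abs, abs_mul]
      calc |f (x + y) - f x - if ‖y‖ ≤ 1 then fderiv ℝ f x y else 0| * |g x|
          ≤ ((2 * Mf + M2) * min 1 (‖y‖ ^ 2)) * |g x| :=
            mul_le_mul_of_nonneg_right (hKf x y) (abs_nonneg _)
        _ = (2 * Mf + M2) * |g x| * min 1 (‖y‖ ^ 2) := by ring
    · refine Integrable.mono' ((hgint.abs.const_mul ((2 * Mf + M2) * Iν)))
        (hFsm.norm.integral_prod_right'.aestronglyMeasurable)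
        (ae_of_all _ fun x => ?_)
      have hnn : 0 ≤ ∫ y, ‖Function.uncurry (fun x y : EuclideanSpace ℝ (Fin d) =>
          (f (x + y) - f x - if ‖y‖ ≤ 1 then fderiv ℝ f x y else 0) * g x) (x, y)‖ ∂ν :=
        integral_nonneg fun y => norm_nonneg _
      rw [Real.norm_of_nonneg hnn]
      have hsecint : Integrable (fun y : EuclideanSpace ℝ (Fin d) =>
          ‖(f (x + y) - f x - if ‖y‖ ≤ 1 then fderiv ℝ f x y else 0) * g x‖) ν := by
        refine Integrable.mono' (hminI.const_mul ((2 * Mf + M2) * |g x|))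
          (((hFsm.comp_measurable measurable_prodMk_left).norm).aestronglyMeasurable)
          (ae_of_all _ fun y => ?_)
        rw [norm_norm, Real.norm_eq_abs, abs_mul]
        calc |f (x + y) - f x - if ‖y‖ ≤ 1 then fderiv ℝ f x y else 0| * |g x|
            ≤ ((2 * Mf + M2) * min 1 (‖y‖ ^ 2)) * |g x| :=
              mul_le_mul_of_nonneg_right (hKf x y) (abs_nonneg _)
          _ = (2 * Mf + M2) * |g x| * min 1 (‖y‖ ^ 2) := by ring
      calc (∫ y, ‖Function.uncurry (fun x y : EuclideanSpace ℝ (Fin d) =>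
              (f (x + y) - f x - if ‖y‖ ≤ 1 then fderiv ℝ f x y else 0) * g x) (x, y)‖ ∂ν)
          ≤ ∫ y, (2 * Mf + M2) * |g x| * min 1 (‖y‖ ^ 2) ∂ν := by
            refine integral_mono hsecint (hminI.const_mul _) fun y => ?_
            simp only [Function.uncurry_apply_pair, Real.norm_eq_abs, abs_mul]
            calc |f (x + y) - f x - if ‖y‖ ≤ 1 then fderiv ℝ f x y else 0| * |g x|
                ≤ ((2 * Mf + M2) * min 1 (‖y‖ ^ 2)) * |g x| :=
                  mul_le_mul_of_nonneg_right (hKf x y) (abs_nonneg _)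
              _ = (2 * Mf + M2) * |g x| * min 1 (‖y‖ ^ 2) := by ring
        _ = (2 * Mf + M2) * Iν * |g x| := by
            rw [integral_const_mul]
            ring
  -- G side: sections in x are integrable
  have hGsec : ∀ y : EuclideanSpace ℝ (Fin d), Integrable
      (fun x => f x * (g (x - y) - g x + if ‖y‖ ≤ 1 then fderiv ℝ g x y else 0)) volume := by
    intro y
    by_cases hy : ‖y‖ ≤ 1
    · simp only [if_pos hy]
      exact (((hi4 y).sub hi2).add (hi5 y)).congr
        (ae_of_all _ fun x => by simp only [Pi.sub_apply, Pi.add_apply]; ring)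
    · simp only [if_neg hy, add_zero]
      exact ((hi4 y).sub hi2).congr
        (ae_of_all _ fun x => by simp only [Pi.sub_apply, Pi.add_apply]; ring)
  -- the compact set S
  set S : Set (EuclideanSpace ℝ (Fin d)) := tsupport g + Metric.closedBall (0 : EuclideanSpace ℝ (Fin d)) 1 with hSdef
  have hScomp : IsCompact S := IsCompact.add hgsupp (isCompact_closedBall _ _)
  have hSmeas : MeasurableSet S := hScomp.isClosed.measurableSet
  have hStop : volume S < ⊤ := hScomp.measure_lt_top
  set volS : ℝ := (volume S).toReal with hvolSdef
  have hvolS0 : 0 ≤ volS := ENNReal.toReal_nonneg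
  have hzero : ∀ y : EuclideanSpace ℝ (Fin d), ‖y‖ ≤ 1 → ∀ x : EuclideanSpace ℝ (Fin d), x ∉ S →
      g (x - y) - g x + fderiv ℝ g x y = 0 := by
    intro y hy x hx
    have hgx : g x = 0 := by
      by_contra h
      exact hx (by
        have hmem : x ∈ tsupport g := subset_closure (by simpa [Function.mem_support] using h)
        have : x + 0 ∈ S := by
          rw [hSdef]
          exact Set.add_mem_add hmem (Metric.mem_closedBall_self zero_le_one)
        simpa using this)
    have hgxy : g (x - y) = 0 := by
      by_contra h
      exact hx (by
        have hmem : x - y ∈ tsupport g := subset_closure (by simpa [Function.mem_support] using h)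
        have hyb : y ∈ Metric.closedBall (0 : EuclideanSpace ℝ (Fin d)) 1 := by
          simpa [Metric.mem_closedBall, dist_eq_norm] using hy
        have : (x - y) + y ∈ S := by
          rw [hSdef]; exact Set.add_mem_add hmem hyb
        simpa using this)
    have hgd0 : fderiv ℝ g x = 0 := by
      by_contra h
      have hmem : x ∈ tsupport g :=
        support_fderiv_subset ℝ (by simpa [Function.mem_support] using h)
      exact hx (by
        have : x + 0 ∈ S := by
          rw [hSdef]
          exact Set.add_mem_add hmem (Metric.mem_closedBall_self zero_le_one)
        simpa using this)
    rw [hgx, hgxy, hgd0]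
    simp
  set Ig : ℝ := ∫ x, |g x| with hIgdef
  have hIg0 : 0 ≤ Ig := integral_nonneg fun x => abs_nonneg _
  set D : ℝ := volS * (Mf * Mg2) + 2 * Mf * Ig with hDdef
  have hGbound : ∀ y : EuclideanSpace ℝ (Fin d),
      (∫ x, ‖f x * (g (x - y) - g x + if ‖y‖ ≤ 1 then fderiv ℝ g x y else 0)‖)
        ≤ D * min 1 (‖y‖ ^ 2) := by
    intro y
    by_cases hy : ‖y‖ ≤ 1
    · have hmin : min 1 (‖y‖ ^ 2) = ‖y‖ ^ 2 := min_eq_right (by nlinarith [norm_nonneg y])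
      have hIndInt : Integrable (S.indicator fun _ => Mf * (Mg2 * ‖y‖ ^ 2)) volume :=
        (integrable_indicator_iff hSmeas).2 (integrableOn_const hStop.ne)
      have hpt : ∀ x : EuclideanSpace ℝ (Fin d),
          ‖f x * (g (x - y) - g x + if ‖y‖ ≤ 1 then fderiv ℝ g x y else 0)‖
          ≤ S.indicator (fun _ => Mf * (Mg2 * ‖y‖ ^ 2)) x := by
        intro x
        simp only [if_pos hy]
        by_cases hx : x ∈ S
        · rw [indicator_of_mem hx]
          rw [Real.norm_eq_abs, abs_mul]
          exact mul_le_mul (hMf x) (hTg x y) (abs_nonneg _) hMf0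
        · rw [indicator_of_notMem hx, hzero y hy x hx]
          simp
      calc (∫ x, ‖f x * (g (x - y) - g x + if ‖y‖ ≤ 1 then fderiv ℝ g x y else 0)‖)
          ≤ ∫ x, S.indicator (fun _ => Mf * (Mg2 * ‖y‖ ^ 2)) x :=
            integral_mono (hGsec y).norm hIndInt hpt
        _ = volS * (Mf * (Mg2 * ‖y‖ ^ 2)) := by
            rw [integral_indicator_const _ hSmeas]
            simp [hvolSdef, smul_eq_mul, Measure.real]
        _ ≤ D * min 1 (‖y‖ ^ 2) := by
            rw [hmin, hDdef]
            nlinarith [sq_nonneg ‖y‖, mul_nonneg hMf0 hIg0, mul_nonneg (mul_nonneg hMf0 hIg0) (sq_nonneg ‖y‖)]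
    · have hmin : min 1 (‖y‖ ^ 2) = 1 := min_eq_left (by nlinarith [norm_nonneg y, not_le.1 hy])
      have hgty : Integrable (fun x => |g (x - y)|) volume :=
        ((hgc.comp (continuous_id.sub continuous_const)).integrable_of_hasCompactSupport
          (hgsub y)).abs
      have htransg : (∫ x, |g (x - y)|) = Ig := by
        have h := integral_sub_right_eq_self (μ := volume) (fun x => |g x|) y
        rw [hIgdef]
        exact h
      have hpt : ∀ x : EuclideanSpace ℝ (Fin d),
          ‖f x * (g (x - y) - g x + if ‖y‖ ≤ 1 then fderiv ℝ g x y else 0)‖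
          ≤ Mf * (|g (x - y)| + |g x|) := by
        intro x
        simp only [if_neg hy, add_zero]
        rw [Real.norm_eq_abs, abs_mul]
        exact mul_le_mul (hMf x) (abs_sub _ _) (abs_nonneg _) hMf0
      calc (∫ x, ‖f x * (g (x - y) - g x + if ‖y‖ ≤ 1 then fderiv ℝ g x y else 0)‖)
          ≤ ∫ x, Mf * (|g (x - y)| + |g x|) :=
            integral_mono (hGsec y).norm ((hgty.add hgint.abs).const_mul Mf) hpt
        _ = Mf * (Ig + Ig) := by
            rw [integral_const_mul, integral_add hgty hgint.abs, htransg]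
        _ ≤ D * min 1 (‖y‖ ^ 2) := by
            rw [hmin, hDdef]
            nlinarith [mul_nonneg hvolS0 (mul_nonneg hMf0 hMg20)]
  -- integrability of G on the product
  have hGint : Integrable
      (Function.uncurry fun x y : EuclideanSpace ℝ (Fin d) =>
        f x * (g (x - y) - g x + if ‖y‖ ≤ 1 then fderiv ℝ g x y else 0))
      (volume.prod ν) := by
    rw [integrable_prod_iff' hGsm.aestronglyMeasurable]
    refine ⟨ae_of_all _ fun y => hGsec y, ?_⟩
    refine Integrable.mono' (hminI.const_mul D)
      (hGsm.norm.integral_prod_left'.aestronglyMeasurable) (ae_of_all _ fun y => ?_)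
    have hnn : 0 ≤ ∫ x, ‖Function.uncurry (fun x y : EuclideanSpace ℝ (Fin d) =>
        f x * (g (x - y) - g x + if ‖y‖ ≤ 1 then fderiv ℝ g x y else 0)) (x, y)‖ :=
      integral_nonneg fun x => norm_nonneg _
    rw [Real.norm_of_nonneg hnn]
    exact hGbound y
  -- final assembly
  have hLopEq : ∀ x : EuclideanSpace ℝ (Fin d), (∫ y, (f (x + y) - f x -
      if ‖y‖ ≤ 1 then fderiv ℝ f x y else 0) * g x ∂ν) = levyOp ν f x * g x := by
    intro x
    rw [levyOp]
    exact integral_mul_const (g x) _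
  have hRopEq : ∀ x : EuclideanSpace ℝ (Fin d), (∫ y, f x * (g (x - y) - g x +
      if ‖y‖ ≤ 1 then fderiv ℝ g x y else 0) ∂ν) = f x * levyOpStar ν g x := by
    intro x
    rw [levyOpStar]
    exact integral_const_mul (f x) _
  refine ⟨?_, ?_, ?_⟩
  · exact hFint.integral_prod_left.congr (ae_of_all _ fun x => hLopEq x)
  · exact hGint.integral_prod_left.congr (ae_of_all _ fun x => hRopEq x)
  · calc (∫ x, levyOp ν f x * g x)
        = ∫ x, ∫ y, (f (x + y) - f x - if ‖y‖ ≤ 1 then fderiv ℝ f x y else 0) * g x ∂ν :=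
          integral_congr_ae (ae_of_all _ fun x => (hLopEq x).symm)
      _ = ∫ y, (∫ x, (f (x + y) - f x - if ‖y‖ ≤ 1 then fderiv ℝ f x y else 0) * g x) ∂ν :=
          integral_integral_swap hFint
      _ = ∫ y, (∫ x, f x * (g (x - y) - g x + if ‖y‖ ≤ 1 then fderiv ℝ g x y else 0)) ∂ν :=
          integral_congr_ae (ae_of_all _ fun y => hswap y)
      _ = ∫ x, ∫ y, f x * (g (x - y) - g x + if ‖y‖ ≤ 1 then fderiv ℝ g x y else 0) ∂ν :=
          (integral_integral_swap hGint).symm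
      _ = ∫ x, f x * levyOpStar ν g x :=
          integral_congr_ae (ae_of_all _ fun x => hRopEq x)
end
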